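/- Let X be a smooth quartic surface in P^3, C ~ sH + D a smooth aCM curve with s = 1 and D satisfying the aCM conditions H·D ≤ 6, D^2 ≤ 4. If N is a divisor with N ⊂ M (i.e., h^0(M-N) ≥ 0 with M = C - N effective and H·(M - N) ≥ 0) and N·H ≥ 5, then one is forced to H·D = 6, D^2 = 4, N·H = 5, H + D ~ 2N, and N^2 = 5; since N^2 = 2P_a(N) - 2 must be even, this is a contradiction. Hence N·H ≥ 5 implies s ≥ 2. -/
import Mathlib


/-- (Lemma 5.1(iv)) On a smooth quartic surface `X ⊂ ℙ³` (`H² = 4`, `H`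
ample), let `C ~ sH + D` with `s = 1` and `D` satisfying the aCM constraints `H·D ≤ 6`,
`D² ≤ 4` (with `D² = 4` when `H·D = 6`). If `N ⊂ M` for `M = C - N` (i.e. `M - N` is
zero or effective, so `H·(M - N) ≥ 0`) and `N·H ≥ 5`, then one is forced to `H·D = 6`,
`D² = 4`, `N·H = 5`, `H + D ~ 2N` and `N² = 5`; since self-intersections on a K3 are
even (adjunction), this is a contradiction. Hence `N·H ≥ 5` forces `s ≥ 2`. -/
theorem quartic_s_eq_one_contradiction
    (Pic : Type*) [AddCommGroup Pic]
    (inter : Pic → Pic → ℤ)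
    (hsymm : ∀ a b, inter a b = inter b a)
    (haddl : ∀ a b c, inter (a + b) c = inter a c + inter b c)
    (h0 : Pic → ℕ)
    (H D C M N : Pic)
    (hH2 : inter H H = 4)
    (hHD : inter H D ≤ 6)
    (hD2 : inter D D ≤ 4)
    (hHD6 : inter H D = 6 → inter D D = 4)
    (hC : C = H + D)
    (hM : M = C - N)
    -- `N ⊂ M`: `M - N` is zero or effective
    (hsub : M - N = 0 ∨ 0 < h0 (M - N))
    (hMNH : 0 ≤ inter (M - N) H)
    (hample : ∀ G, 0 < h0 G → G ≠ 0 → 0 < inter G H)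
    -- adjunction on a K3: self-intersections are even
    (heven : ∀ G, Even (inter G G))
    (hNH : 5 ≤ inter N H) :
    False := by
  have hzero : ∀ c, inter 0 c = 0 := fun c => by
    have := haddl 0 0 c; simpa using this
  have hneg : ∀ a c, inter (-a) c = - inter a c := fun a c => by
    have := haddl a (-a) c; simp [hzero] at this; linarith
  have hsubl : ∀ a b c, inter (a - b) c = inter a c - inter b c := fun a b c => by
    rw [sub_eq_add_neg, haddl, hneg]; ring
  -- H·(M - N) = 4 + H·D - 2 N·H
  have key : inter (M - N) H = 4 + inter H D - 2 * inter N H := by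
    rw [hM, hC, hsubl, hsubl, haddl, hH2, hsymm D H]; ring
  have hHD6' : inter H D = 6 := by omega
  have hMNH0 : inter (M - N) H = 0 := by omega
  have hMN0 : M - N = 0 := by
    rcases hsub with h | h
    · exact h
    · by_contra hne
      have := hample (M - N) h hne
      omega
  have h2N : H + D = N + N := by
    have : C - N - N = 0 := by rw [← hM]; exact hMN0
    have hCN : C = N + N := by
      have := sub_eq_zero.mp (by rw [sub_sub] at this; exact this)
      simpa using this
    rw [← hC, hCN]
  have hNN : inter (H + D) (H + D) = 4 * inter N N := by
    rw [h2N, haddl, hsymm N (N + N), haddl]; ring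
  have hexp : inter (H + D) (H + D) = 20 := by
    rw [haddl, hsymm H (H + D), hsymm D (H + D), haddl, haddl]
    rw [hH2, hHD6', (hHD6 hHD6') , hsymm D H, hHD6']
    ring
  have hN2 : inter N N = 5 := by omega
  have := heven N
  rw [hN2] at this
  exact (by decide : ¬ Even (5 : ℤ)) this
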